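/- Let ν > 2 and let m be any real number with 0 < m < ν. Set κ_m = Γ((ν+1)/2)(ν − m) m^{ν/2 − 1} / (2√π Γ(ν/2)). Then for every t > 0, 1 / ((1 − F_ν(t)) (t² + ν)^{(ν−1)/2}) ≤ √(t² + ν − m) / κ_m. -/

import Mathlib

open MeasureTheory

open Set Real Filter Topology
open scoped ENNReal


lemma bernoulli_aux {q y : ℝ} (hq : 0 ≤ q) (hy0 : 0 ≤ y) (hy1 : y ≤ 1) :
    (1 + q * y) * (1 - y) ^ q ≤ 1 := by
  rcases le_total q 1 with h1 | h1
  · have h : (1 + -y) ^ q ≤ 1 + q * (-y) :=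
      rpow_one_add_le_one_add_mul_self (by linarith) hq h1
    have h2 : (0:ℝ) ≤ 1 + q * y := by nlinarith
    calc (1 + q * y) * (1 - y) ^ q ≤ (1 + q * y) * (1 - q * y) := by
          rw [show (1:ℝ) - y = 1 + -y by ring] ; nlinarith [Real.rpow_nonneg (by linarith : (0:ℝ) ≤ 1 + -y) q]
      _ ≤ 1 := by nlinarith [sq_nonneg (q*y)]
  · have h : 1 + q * y ≤ (1 + y) ^ q :=
      one_add_mul_self_le_rpow_one_add (by linarith) h1
    have hpow : (0:ℝ) ≤ (1 - y) ^ q := Real.rpow_nonneg (by linarith) q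
    calc (1 + q * y) * (1 - y) ^ q ≤ (1 + y) ^ q * (1 - y) ^ q := by nlinarith
      _ = ((1 + y) * (1 - y)) ^ q := (Real.mul_rpow (by linarith) (by linarith)).symm
      _ ≤ 1 := Real.rpow_le_one (by nlinarith) (by nlinarith) hq

-- key scalar inequality
lemma key_scalar {ν m : ℝ} (hν : 2 < ν) (hm : 0 < m) (hmν : m < ν) :
    (ν ^ 2 - (ν - 1) * m) * m ^ (ν / 2 - 1) ≤ 2 * ν ^ (ν / 2) := by
  set q : ℝ := ν / 2 - 1 with hqdef
  have hq : 0 < q := by simp [hqdef]; linarith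
  set x : ℝ := m / ν with hxdef
  have hν0 : (0:ℝ) < ν := by linarith
  have hx0 : 0 < x := div_pos hm hν0
  have hx1 : x < 1 := (div_lt_one hν0).2 hmν
  set y : ℝ := 1 - x with hydef
  have hy0 : 0 ≤ y := by simp [hydef]; linarith
  have hy1 : y ≤ 1 := by simp [hydef]; linarith
  have hb : (1 + q * y) * (1 - y) ^ q ≤ 1 := bernoulli_aux hq.le hy0 hy1
  -- (1-y)^q (1 + (2q+1) y) ≤ 2
  have h2 : (1 - y) ^ q * (1 + (2 * q + 1) * y) ≤ 2 := by
    have hpow : (0:ℝ) ≤ (1 - y) ^ q := Real.rpow_nonneg (by linarith) q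
    -- (1+(2q+1)y) ≤ 2(1+qy) since y ≤ 1
    have h3 : 1 + (2 * q + 1) * y ≤ 2 * (1 + q * y) := by nlinarith
    nlinarith
  -- now m = ν * x, m ^ q = ν^q * x^q
  have hmx : m = ν * x := by rw [hxdef]; field_simp
  have hmq : m ^ q = ν ^ q * x ^ q := by
    rw [hmx, Real.mul_rpow hν0.le hx0.le]
  have hνq : ν ^ (ν / 2) = ν ^ q * ν := by
    rw [← Real.rpow_add_one hν0.ne' q, hqdef]
    norm_num
  have hx : x = 1 - y := by simp [hydef]
  have hcoef : ν ^ 2 - (ν - 1) * m = ν * (1 + (2 * q + 1) * y) := by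
    rw [hmx, hx]; simp only [hqdef]; ring
  rw [hcoef, hmq, hνq, hx]
  have hνqpos : (0:ℝ) < ν ^ q := Real.rpow_pos_of_pos hν0 q
  calc ν * (1 + (2 * q + 1) * y) * (ν ^ q * (1 - y) ^ q)
      = (ν * ν ^ q) * ((1 - y) ^ q * (1 + (2 * q + 1) * y)) := by ring
    _ ≤ (ν * ν ^ q) * 2 := by
        apply mul_le_mul_of_nonneg_left h2 (by positivity)
    _ = 2 * (ν ^ q * ν) := by ring


lemma integrableOn_rpow_exp_aux {a r : ℝ} (ha : -1 < a) (hr : 0 < r) :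
    IntegrableOn (fun t : ℝ => t ^ a * Real.exp (-(r * t))) (Ioi 0) := by
  have h := integrableOn_rpow_mul_exp_neg_mul_rpow (s := a) (p := 1) (b := r) ha zero_lt_one hr
  refine h.congr_fun (fun x hx => ?_) measurableSet_Ioi
  simp only [Real.rpow_one]
  ring_nf

lemma lintegral_one_add_sq_rpow_neg {p : ℝ} (hp : 1/2 < p) :
    ∫⁻ x : ℝ, ENNReal.ofReal ((1 + x ^ 2) ^ (-p))
      = ENNReal.ofReal (Real.sqrt π * Real.Gamma (p - 1/2) / Real.Gamma p) := by
  have hp0 : 0 < p := by linarith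
  have hΓp : 0 < Real.Gamma p := Real.Gamma_pos_of_pos hp0
  have hΓq : 0 < Real.Gamma (p - 1/2) := Real.Gamma_pos_of_pos (by linarith)
  -- pointwise representation
  have hrep : ∀ x : ℝ, (1 + x ^ 2) ^ (-p)
      = (1 / Real.Gamma p) * ∫ s in Ioi (0:ℝ), s ^ (p - 1) * Real.exp (-((1 + x ^ 2) * s)) := by
    intro x
    have hx : (0:ℝ) < 1 + x ^ 2 := by positivity
    rw [integral_rpow_mul_exp_neg_mul_Ioi hp0 hx]
    rw [show (1:ℝ)/(1+x^2) = (1+x^2)⁻¹ from one_div _, Real.inv_rpow hx.le, ← Real.rpow_neg hx.le]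
    field_simp
  set F : ℝ → ℝ → ℝ≥0∞ :=
    fun x s => ENNReal.ofReal (Real.exp (Real.log s * (p - 1)) * Real.exp (-((1 + x ^ 2) * s)))
    with hF
  have hFmeas : Measurable (Function.uncurry F) := by
    apply ENNReal.measurable_ofReal.comp
    exact (((Real.measurable_log.comp measurable_snd).mul_const _).exp).mul
      (((measurable_const.add ((measurable_fst.pow measurable_const))).mul
        measurable_snd).neg.exp)
  have hFval : ∀ x : ℝ, ∀ s ∈ Ioi (0:ℝ),
      F x s = ENNReal.ofReal (s ^ (p - 1) * Real.exp (-((1 + x ^ 2) * s))) := by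
    intro x s hs
    rw [hF]
    congr 1
    rw [Real.rpow_def_of_pos hs]
  -- inner representation as lintegral
  have hx_int : ∀ x : ℝ, IntegrableOn
      (fun s : ℝ => s ^ (p - 1) * Real.exp (-((1 + x ^ 2) * s))) (Ioi 0) :=
    fun x => integrableOn_rpow_exp_aux (by linarith) (by positivity)
  have hofReal : ∀ x : ℝ, ENNReal.ofReal
      (∫ s in Ioi (0:ℝ), s ^ (p - 1) * Real.exp (-((1 + x ^ 2) * s)))
      = ∫⁻ s in Ioi (0:ℝ), F x s := by
    intro x
    rw [setLIntegral_congr_fun measurableSet_Ioi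
      (hFval x)]
    apply ofReal_integral_eq_lintegral_ofReal (hx_int x)
    filter_upwards [ae_restrict_mem measurableSet_Ioi] with s hs
    have hs0 : (0:ℝ) < s := hs
    positivity
  -- master lintegral computation
  have hL : ∫⁻ x : ℝ, ENNReal.ofReal ((1 + x ^ 2) ^ (-p))
      = ENNReal.ofReal (1 / Real.Gamma p) * ∫⁻ s in Ioi (0:ℝ), ∫⁻ x : ℝ, F x s := by
    rw [← lintegral_lintegral_swap hFmeas.aemeasurable,
        ← lintegral_const_mul' _ _ (by simp : ENNReal.ofReal (1/Real.Gamma p) ≠ ⊤)]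
    apply lintegral_congr
    intro x
    rw [hrep x, ENNReal.ofReal_mul (by positivity), hofReal x]
  -- inner gaussian integral
  have hinner : ∀ s ∈ Ioi (0:ℝ), (∫⁻ x : ℝ, F x s)
      = ENNReal.ofReal (s ^ (p - 1) * Real.exp (-s) * Real.sqrt (π / s)) := by
    intro s hs
    have hs0 : (0:ℝ) < s := hs
    have hkey : ∀ x : ℝ, F x s
        = ENNReal.ofReal ((s ^ (p-1) * Real.exp (-s)) * Real.exp (-s * x^2)) := by
      intro x
      rw [hFval x s hs]
      congr 1
      rw [mul_assoc, ← Real.exp_add]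
      ring_nf
    have hint : Integrable (fun x : ℝ => Real.exp (-s * x ^ 2)) := integrable_exp_neg_mul_sq hs0
    simp only [hkey]
    rw [← ofReal_integral_eq_lintegral_ofReal (hint.const_mul _)
      (Filter.Eventually.of_forall (fun x => by positivity))]
    rw [integral_const_mul, integral_gaussian]
  -- outer integral
  have houter : ∫⁻ s in Ioi (0:ℝ), (∫⁻ x : ℝ, F x s)
      = ENNReal.ofReal (Real.sqrt π * Real.Gamma (p - 1/2)) := by
    rw [setLIntegral_congr_fun measurableSet_Ioi
      (fun s hs => hinner s hs)]
    have heq : ∀ s ∈ Ioi (0:ℝ), s ^ (p-1) * Real.exp (-s) * Real.sqrt (π / s)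
        = Real.sqrt π * (s ^ (p - 1/2 - 1) * Real.exp (-(1 * s))) := by
      intro s hs
      have hs0 : (0:ℝ) < s := hs
      rw [div_eq_mul_inv π s, Real.sqrt_mul Real.pi_pos.le, Real.sqrt_inv,
        Real.sqrt_eq_rpow s, ← Real.rpow_neg hs0.le]
      rw [show s ^ (p - 1/2 - 1) = s ^ (p-1) * s ^ (-(1/(2:ℝ))) by
        rw [← Real.rpow_add hs0]; congr 1; ring]
      ring_nf
    have hint2 : IntegrableOn
        (fun s : ℝ => Real.sqrt π * (s ^ (p - 1/2 - 1) * Real.exp (-(1 * s)))) (Ioi 0) :=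
      (integrableOn_rpow_exp_aux (by linarith) one_pos).const_mul _
    rw [setLIntegral_congr_fun measurableSet_Ioi
      (fun s hs => by rw [heq s hs])]
    rw [← ofReal_integral_eq_lintegral_ofReal hint2 ?nn]
    case nn =>
      filter_upwards [ae_restrict_mem measurableSet_Ioi] with s hs
      have hs0 : (0:ℝ) < s := hs
      positivity
    rw [integral_const_mul, integral_rpow_mul_exp_neg_mul_Ioi (by linarith) one_pos]
    norm_num
  rw [hL, houter, ← ENNReal.ofReal_mul (by positivity)]
  congr 1
  field_simp


lemma continuous_one_add_sq_rpow_neg (p : ℝ) :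
    Continuous (fun x : ℝ => (1 + x ^ 2) ^ (-p)) := by
  apply Continuous.rpow_const (by continuity)
  intro x
  left
  positivity

lemma integral_one_add_sq_rpow_neg {p : ℝ} (hp : 1/2 < p) :
    ∫ x : ℝ, (1 + x ^ 2) ^ (-p) = Real.sqrt π * Real.Gamma (p - 1/2) / Real.Gamma p := by
  rw [integral_eq_lintegral_of_nonneg_ae
    (Filter.Eventually.of_forall (fun x => by positivity))
    (continuous_one_add_sq_rpow_neg p).aestronglyMeasurable]
  rw [lintegral_one_add_sq_rpow_neg hp, ENNReal.toReal_ofReal]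
  have h1 : 0 < Real.Gamma p := Real.Gamma_pos_of_pos (by linarith)
  have h2 : 0 < Real.Gamma (p - 1/2) := Real.Gamma_pos_of_pos (by linarith)
  positivity

lemma integrable_one_add_sq_rpow_neg {p : ℝ} (hp : 1/2 < p) :
    Integrable (fun x : ℝ => (1 + x ^ 2) ^ (-p)) := by
  refine ⟨(continuous_one_add_sq_rpow_neg p).aestronglyMeasurable, ?_⟩
  rw [hasFiniteIntegral_iff_ofReal (Filter.Eventually.of_forall (fun x => by positivity))]
  rw [lintegral_one_add_sq_rpow_neg hp]
  exact ENNReal.ofReal_lt_top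

section density
variable {ν : ℝ}

lemma tdens_eq (hν : 0 < ν) (u : ℝ) : (1 + u ^ 2 / ν) = 1 + ((Real.sqrt ν)⁻¹ * u) ^ 2 := by
  rw [mul_pow, inv_pow, Real.sq_sqrt hν.le]
  ring

lemma integrable_tdens (hν : 0 < ν) : Integrable (fun u : ℝ => (1 + u ^ 2 / ν) ^ (-((ν+1)/2))) := by
  have h : Integrable (fun u : ℝ =>
      (fun x : ℝ => (1 + x ^ 2) ^ (-((ν+1)/2))) ((Real.sqrt ν)⁻¹ * u)) := by
    apply (integrable_one_add_sq_rpow_neg (by linarith)).comp_mul_left'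
    simp [Real.sqrt_eq_zero', hν, hν.le, not_le]
    linarith
  refine h.congr (Filter.Eventually.of_forall (fun u => ?_))
  simp only []
  rw [← tdens_eq hν u]

lemma integral_tdens (hν : 0 < ν) : ∫ u : ℝ, (1 + u ^ 2 / ν) ^ (-((ν+1)/2))
    = Real.sqrt ν * (Real.sqrt π * Real.Gamma (ν/2) / Real.Gamma ((ν+1)/2)) := by
  have hs : (0:ℝ) < Real.sqrt ν := Real.sqrt_pos.2 hν
  have key : ∫ x : ℝ, (1 + x ^ 2) ^ (-((ν+1)/2))
      = Real.sqrt π * Real.Gamma (ν/2) / Real.Gamma ((ν+1)/2) := by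
    rw [integral_one_add_sq_rpow_neg (by linarith), show (ν+1)/2 - 1/2 = ν/2 by ring]
  calc ∫ u : ℝ, (1 + u ^ 2 / ν) ^ (-((ν+1)/2))
      = ∫ u : ℝ, (fun x : ℝ => (1 + x ^ 2) ^ (-((ν+1)/2))) ((Real.sqrt ν)⁻¹ * u) := by
        congr 1; funext u
        simp only []
        rw [← tdens_eq hν u]
    _ = |Real.sqrt ν| • ∫ x : ℝ, (1 + x ^ 2) ^ (-((ν+1)/2)) :=
        MeasureTheory.Measure.integral_comp_inv_mul_left
          (fun x : ℝ => (1 + x ^ 2) ^ (-((ν+1)/2))) (Real.sqrt ν)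
    _ = Real.sqrt ν * (Real.sqrt π * Real.Gamma (ν/2) / Real.Gamma ((ν+1)/2)) := by
        rw [abs_of_pos hs, smul_eq_mul, key]

lemma integral_tdensity (hν : 0 < ν) :
    ∫ u : ℝ, (Real.Gamma ((ν + 1) / 2) / (Real.sqrt (ν * π) * Real.Gamma (ν / 2))) *
      (1 + u ^ 2 / ν) ^ (-((ν + 1) / 2)) = 1 := by
  rw [integral_const_mul, integral_tdens hν]
  have h1 : 0 < Real.Gamma ((ν+1)/2) := Real.Gamma_pos_of_pos (by linarith)
  have h2 : 0 < Real.Gamma (ν/2) := Real.Gamma_pos_of_pos (by linarith)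
  rw [Real.sqrt_mul hν.le]
  have hs : (0:ℝ) < Real.sqrt ν := Real.sqrt_pos.2 hν
  have hπ : (0:ℝ) < Real.sqrt π := Real.sqrt_pos.2 Real.pi_pos
  field_simp

end density


noncomputable def tCDF (ν t : ℝ) : ℝ :=
  ∫ u in Set.Iic t,
    (Real.Gamma ((ν + 1) / 2) / (Real.sqrt (ν * Real.pi) * Real.Gamma (ν / 2))) *
      (1 + u ^ 2 / ν) ^ (-((ν + 1) / 2))

set_option maxHeartbeats 2000000 in
theorem mills_ratio_t (ν m : ℝ) (hν : 2 < ν) (hm : 0 < m) (hmν : m < ν) (t : ℝ) (ht : 0 < t) :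
    1 / ((1 - tCDF ν t) * (t ^ 2 + ν) ^ ((ν - 1) / 2)) ≤
      Real.sqrt (t ^ 2 + ν - m) /
        (Real.Gamma ((ν + 1) / 2) * (ν - m) * m ^ (ν / 2 - 1) /
          (2 * Real.sqrt Real.pi * Real.Gamma (ν / 2))) := by
  have hν0 : (0:ℝ) < ν := by linarith
  have hΓ1 : 0 < Real.Gamma ((ν+1)/2) := Real.Gamma_pos_of_pos (by linarith)
  have hΓ2 : 0 < Real.Gamma (ν/2) := Real.Gamma_pos_of_pos (by linarith)
  have hπ : (0:ℝ) < Real.sqrt π := Real.sqrt_pos.2 Real.pi_pos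
  have hsν : (0:ℝ) < Real.sqrt ν := Real.sqrt_pos.2 hν0
  set p : ℝ := (ν+1)/2 with hp
  set c : ℝ := Real.Gamma ((ν+1)/2) / (Real.sqrt (ν*π) * Real.Gamma (ν/2)) with hc
  have hcpos : 0 < c := by
    rw [hc]
    have : (0:ℝ) < Real.sqrt (ν*π) := Real.sqrt_pos.2 (by positivity)
    positivity
  set κ : ℝ := Real.Gamma ((ν+1)/2) * (ν-m) * m ^ (ν/2-1) / (2*Real.sqrt π * Real.Gamma (ν/2))
    with hκ
  have hmq : (0:ℝ) < m ^ (ν/2-1) := Real.rpow_pos_of_pos hm _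
  have hκpos : 0 < κ := by
    rw [hκ]
    have hνm : (0:ℝ) < ν - m := by linarith
    positivity
  set f : ℝ → ℝ := fun u => c * (1 + u^2/ν) ^ (-((ν+1)/2)) with hfdef
  have hA : ∀ u:ℝ, (0:ℝ) < u^2+ν := fun u => by positivity
  have hB : ∀ u:ℝ, (0:ℝ) < u^2+ν-m := fun u => by nlinarith [sq_nonneg u]
  set G : ℝ → ℝ := fun u => κ * ((u^2+ν) ^ (-((ν-1)/2)) * (u^2+ν-m) ^ (-(1/2):ℝ)) with hGdef
  set G' : ℝ → ℝ := fun u =>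
    κ * ((2*u * -((ν-1)/2) * (u^2+ν) ^ (-((ν-1)/2) - 1)) * (u^2+ν-m) ^ (-(1/2):ℝ)
      + (u^2+ν) ^ (-((ν-1)/2)) * (2*u * -(1/2:ℝ) * (u^2+ν-m) ^ ((-(1/2):ℝ) - 1))) with hG'def
  have hderiv : ∀ u:ℝ, HasDerivAt G (G' u) u := by
    intro u
    have h1 : HasDerivAt (fun u:ℝ => u^2+ν) (2*u) u := by
      simpa using (hasDerivAt_pow 2 u).add_const ν
    have h2 : HasDerivAt (fun u:ℝ => u^2+ν-m) (2*u) u := h1.sub_const m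
    have hA' := h1.rpow_const (p := -((ν-1)/2)) (Or.inl (hA u).ne')
    have hB' := h2.rpow_const (p := (-(1/2):ℝ)) (Or.inl (hB u).ne')
    exact (hA'.mul hB').const_mul κ
  -- rewrite G' in a convenient form
  have hG'eq : ∀ u:ℝ, G' u
      = -((κ * u * (ν*(u^2+ν-m)+m)) * ((u^2+ν) ^ (-p) * (u^2+ν-m) ^ (-(3/2):ℝ))) := by
    intro u
    have e1 : (u^2+ν) ^ (-((ν-1)/2) - 1) = (u^2+ν) ^ (-p) := by
      congr 1; rw [hp]; ring
    have e2 : (u^2+ν) ^ (-((ν-1)/2)) = (u^2+ν) ^ (-p) * (u^2+ν) := by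
      rw [show -((ν-1)/2) = -p + 1 by rw [hp]; ring, Real.rpow_add (hA u), Real.rpow_one]
    have e3 : (u^2+ν-m) ^ (-(1/2):ℝ) = (u^2+ν-m) ^ (-(3/2):ℝ) * (u^2+ν-m) := by
      rw [show (-(1/2):ℝ) = -(3/2) + 1 by ring, Real.rpow_add (hB u), Real.rpow_one]
    have e4 : (u^2+ν-m) ^ ((-(1/2):ℝ) - 1) = (u^2+ν-m) ^ (-(3/2):ℝ) := by
      congr 1; ring
    rw [hG'def]
    simp only []
    rw [e1, e2, e3, e4]
    ring
  -- density in A-form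
  have hfeq : ∀ u:ℝ, f u = (c * ν ^ p) * ((u^2+ν) ^ (-p)) := by
    intro u
    rw [hfdef]
    simp only []
    have : (1 + u^2/ν) = (u^2+ν)/ν := by field_simp; ring
    rw [this, Real.div_rpow (hA u).le hν0.le, ← hp, Real.rpow_neg hν0.le p]
    field_simp
  -- the key pointwise bound : κ * u * (ν*B+m) ≤ c * ν^p * B^(3/2) for u ≥ 0
  have hcore : ∀ u:ℝ, 0 ≤ u →
      κ * u * (ν*(u^2+ν-m)+m) ≤ (c * ν ^ p) * (u^2+ν-m) ^ ((3:ℝ)/2) := by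
    intro u hu
    set B : ℝ := u^2+ν-m with hBdef
    have hB0 : 0 < B := hB u
    have hBa : ν - m ≤ B := by nlinarith [sq_nonneg u]
    have hνm : (0:ℝ) < ν - m := by linarith
    have hNB : 0 < ν * B + m := by positivity
    -- u ≤ B^(1/2)
    have h1 : u ≤ B ^ ((1:ℝ)/2) := by
      rw [← Real.sqrt_eq_rpow]
      rw [show u = Real.sqrt (u^2) by rw [Real.sqrt_sq hu]]
      exact Real.sqrt_le_sqrt (by nlinarith)
    have hB12 : (0:ℝ) < B ^ ((1:ℝ)/2) := Real.rpow_pos_of_pos hB0 _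
    have hB32 : (0:ℝ) < B ^ ((3:ℝ)/2) := Real.rpow_pos_of_pos hB0 _
    have h32 : B ^ ((3:ℝ)/2) = B ^ ((1:ℝ)/2) * B := by
      rw [show (3:ℝ)/2 = 1/2 + 1 by ring, Real.rpow_add hB0, Real.rpow_one]
    -- step 2 : B^(1/2) * (ν*B+m) ≤ B^(3/2) * (ν + m/(ν-m))
    have h2 : B ^ ((1:ℝ)/2) * (ν*B+m) ≤ B ^ ((3:ℝ)/2) * (ν + m/(ν-m)) := by
      rw [h32]
      have h0 : m ≤ B * m / (ν-m) := by
        rw [le_div_iff₀ hνm]; nlinarith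
      have hmb : m * B ^ ((1:ℝ)/2) ≤ B ^ ((1:ℝ)/2) * B * (m/(ν-m)) := by
        calc m * B ^ ((1:ℝ)/2) = B ^ ((1:ℝ)/2) * m := by ring
          _ ≤ B ^ ((1:ℝ)/2) * (B * m / (ν-m)) := mul_le_mul_of_nonneg_left h0 hB12.le
          _ = B ^ ((1:ℝ)/2) * B * (m/(ν-m)) := by ring
      nlinarith
    -- step 3 : κ * (ν + m/(ν-m)) ≤ c * ν^p
    have h3 : κ * (ν + m/(ν-m)) ≤ c * ν ^ p := by
      have hkey := key_scalar hν hm hmν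
      have hsplitπ : Real.sqrt (ν*π) = Real.sqrt ν * Real.sqrt π := Real.sqrt_mul hν0.le π
      have hνp : ν ^ p = ν ^ (ν/2) * Real.sqrt ν := by
        rw [Real.sqrt_eq_rpow, ← Real.rpow_add hν0]
        congr 1
        rw [hp]; ring
      have hνh : (0:ℝ) < ν ^ (ν/2) := Real.rpow_pos_of_pos hν0 _
      have e1 : κ * (ν + m/(ν-m))
          = Real.Gamma ((ν+1)/2)/(Real.sqrt π * Real.Gamma (ν/2))
            * ((ν^2-(ν-1)*m) * m ^ (ν/2-1)/2) := by
        rw [hκ]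
        field_simp
        ring
      have e2 : c * ν ^ p
          = Real.Gamma ((ν+1)/2)/(Real.sqrt π * Real.Gamma (ν/2)) * ν ^ (ν/2) := by
        rw [hc, hνp, hsplitπ]
        field_simp
      rw [e1, e2]
      apply mul_le_mul_of_nonneg_left _ (by positivity)
      linarith
    calc κ * u * (ν*B+m) ≤ κ * B ^ ((1:ℝ)/2) * (ν*B+m) := by
          apply mul_le_mul_of_nonneg_right _ hNB.le
          exact mul_le_mul_of_nonneg_left h1 hκpos.le
      _ = κ * (B ^ ((1:ℝ)/2) * (ν*B+m)) := by ring
      _ ≤ κ * (B ^ ((3:ℝ)/2) * (ν + m/(ν-m))) := mul_le_mul_of_nonneg_left h2 hκpos.le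
      _ = (κ * (ν + m/(ν-m))) * B ^ ((3:ℝ)/2) := by ring
      _ ≤ (c * ν ^ p) * B ^ ((3:ℝ)/2) := mul_le_mul_of_nonneg_right h3 hB32.le
  -- nonnegativity of f and of -G'
  have hf0 : ∀ u:ℝ, 0 ≤ f u := by
    intro u
    rw [hfeq u]
    have := Real.rpow_nonneg (hA u).le (-p)
    have := Real.rpow_pos_of_pos hν0 p
    positivity
  have hG'nonneg : ∀ u:ℝ, 0 ≤ u → 0 ≤ -(G' u) := by
    intro u hu
    rw [hG'eq u, neg_neg]
    have h1 := Real.rpow_nonneg (hA u).le (-p)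
    have h2 := Real.rpow_nonneg (hB u).le (-(3/2):ℝ)
    have h3 : 0 < ν*(u^2+ν-m)+m := by have := hB u; positivity
    positivity
  -- pointwise bound -G' ≤ f for u > 0
  have hbound : ∀ u:ℝ, 0 < u → -(G' u) ≤ f u := by
    intro u hu
    rw [hG'eq u, hfeq u, neg_neg]
    have hBneg : (u^2+ν-m) ^ ((3:ℝ)/2) * (u^2+ν-m) ^ (-(3/2):ℝ) = 1 := by
      rw [← Real.rpow_add (hB u)]
      norm_num
    have hApn := Real.rpow_nonneg (hA u).le (-p)
    have hBpn := Real.rpow_nonneg (hB u).le (-(3/2):ℝ)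
    calc κ * u * (ν*(u^2+ν-m)+m) * ((u^2+ν) ^ (-p) * (u^2+ν-m) ^ (-(3/2):ℝ))
        ≤ (c * ν ^ p) * (u^2+ν-m) ^ ((3:ℝ)/2) * ((u^2+ν) ^ (-p) * (u^2+ν-m) ^ (-(3/2):ℝ)) := by
          apply mul_le_mul_of_nonneg_right (hcore u hu.le) (by positivity)
      _ = c * ν ^ p * (u^2+ν) ^ (-p)
            * ((u^2+ν-m) ^ ((3:ℝ)/2) * (u^2+ν-m) ^ (-(3/2):ℝ)) := by ring
      _ = c * ν ^ p * (u^2+ν) ^ (-p) := by rw [hBneg, mul_one]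
  -- continuity of G'
  have cA : Continuous fun u:ℝ => u^2+ν := by continuity
  have cB : Continuous fun u:ℝ => u^2+ν-m := by continuity
  have hG'cont : Continuous G' := by
    rw [hG'def]
    have hsum : Continuous fun u : ℝ =>
        (2*u * -((ν-1)/2) * (u^2+ν) ^ (-((ν-1)/2) - 1)) * (u^2+ν-m) ^ (-(1/2):ℝ)
          + (u^2+ν) ^ (-((ν-1)/2)) * (2*u * -(1/2:ℝ) * (u^2+ν-m) ^ ((-(1/2):ℝ) - 1)) := by
      apply Continuous.add
      · exact (((continuous_const.mul continuous_id).mul continuous_const).mul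
          (cA.rpow_const fun u => Or.inl (hA u).ne')).mul
          (cB.rpow_const fun u => Or.inl (hB u).ne')
      · exact (cA.rpow_const fun u => Or.inl (hA u).ne').mul
          (((continuous_const.mul continuous_id).mul continuous_const).mul
            (cB.rpow_const fun u => Or.inl (hB u).ne'))
    exact continuous_const.mul hsum
  -- integrability
  have hfint : Integrable f := (integrable_tdens hν0).const_mul c
  have hfIoi : IntegrableOn f (Ioi t) := hfint.integrableOn
  have hG'int : IntegrableOn G' (Ioi t) := by
    apply Integrable.mono hfIoi hG'cont.aestronglyMeasurable.restrict
    filter_upwards [ae_restrict_mem measurableSet_Ioi] with u hu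
    have hu0 : 0 < u := ht.trans hu
    rw [Real.norm_eq_abs, Real.norm_eq_abs,
      abs_of_nonpos (by linarith [hG'nonneg u hu0.le]),
      abs_of_nonneg (hf0 u)]
    exact hbound u hu0
  -- limit of G at infinity
  have l1 : Tendsto (fun u:ℝ => u^2+ν) atTop atTop :=
    tendsto_atTop_add_const_right _ ν (tendsto_pow_atTop two_ne_zero)
  have l1' : Tendsto (fun u:ℝ => u^2+ν-m) atTop atTop :=
    tendsto_atTop_add_const_right _ (-m) l1
  have l2 : Tendsto (fun u:ℝ => (u^2+ν) ^ (-((ν-1)/2))) atTop (𝓝 0) :=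
    (tendsto_rpow_neg_atTop (by linarith : (0:ℝ) < (ν-1)/2)).comp l1
  have l3 : Tendsto (fun u:ℝ => (u^2+ν-m) ^ (-(1/2):ℝ)) atTop (𝓝 0) :=
    (tendsto_rpow_neg_atTop (by norm_num : (0:ℝ) < 1/2)).comp l1'
  have hGtend : Tendsto G atTop (𝓝 0) := by
    have h := (l2.mul l3).const_mul κ
    rw [hGdef]
    simpa using h
  -- FTC
  have hFTC : ∫ u in Ioi t, G' u = 0 - G t :=
    integral_Ioi_of_hasDerivAt_of_tendsto (hderiv t).continuousAt.continuousWithinAt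
      (fun x _ => hderiv x) hG'int hGtend
  have hGt : G t = ∫ u in Ioi t, -(G' u) := by
    rw [integral_neg, hFTC]; ring
  have hmono : ∫ u in Ioi t, -(G' u) ≤ ∫ u in Ioi t, f u :=
    setIntegral_mono_on hG'int.neg hfIoi measurableSet_Ioi
      (fun u hu => hbound u (ht.trans hu))
  have htail : ∫ u in Ioi t, f u = 1 - tCDF ν t := by
    have hsplit2 := integral_add_compl (measurableSet_Iic (a := t)) hfint
    rw [compl_Iic] at hsplit2
    have htot : ∫ u, f u = 1 := by
      rw [hfdef]
      simp only [hc]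
      exact integral_tdensity hν0
    have hch : tCDF ν t = ∫ u in Iic t, f u := by
      simp only [tCDF, hfdef, hc]
    linarith
  have hle : G t ≤ 1 - tCDF ν t := by
    rw [hGt]
    linarith
  -- final algebra
  have hAe : (0:ℝ) < (t^2+ν) ^ ((ν-1)/2) := Real.rpow_pos_of_pos (hA t) _
  have hBt : (0:ℝ) < (t^2+ν-m) ^ (-(1/2):ℝ) := Real.rpow_pos_of_pos (hB t) _
  have hGpos : 0 < G t := by
    rw [hGdef]
    have := Real.rpow_pos_of_pos (hA t) (-((ν-1)/2))
    positivity
  have hkeyEq : G t * (t^2+ν) ^ ((ν-1)/2) = κ * (t^2+ν-m) ^ (-(1/2):ℝ) := by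
    rw [hGdef]
    simp only []
    have hone : (t^2+ν) ^ (-((ν-1)/2)) * (t^2+ν) ^ ((ν-1)/2) = 1 := by
      rw [← Real.rpow_add (hA t)]
      norm_num
    calc κ * ((t^2+ν) ^ (-((ν-1)/2)) * (t^2+ν-m) ^ (-(1/2):ℝ)) * (t^2+ν) ^ ((ν-1)/2)
        = κ * (t^2+ν-m) ^ (-(1/2):ℝ)
          * ((t^2+ν) ^ (-((ν-1)/2)) * (t^2+ν) ^ ((ν-1)/2)) := by ring
      _ = κ * (t^2+ν-m) ^ (-(1/2):ℝ) := by rw [hone, mul_one]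
  have hfin : (1:ℝ)/(G t * (t^2+ν) ^ ((ν-1)/2)) = Real.sqrt (t^2+ν-m) / κ := by
    rw [hkeyEq]
    rw [show (t^2+ν-m) ^ (-(1/2):ℝ) = (Real.sqrt (t^2+ν-m))⁻¹ by
      rw [Real.rpow_neg (hB t).le, Real.sqrt_eq_rpow]]
    have hsB : (0:ℝ) < Real.sqrt (t^2+ν-m) := Real.sqrt_pos.2 (hB t)
    field_simp
  calc 1 / ((1 - tCDF ν t) * (t ^ 2 + ν) ^ ((ν - 1) / 2))
      ≤ 1 / (G t * (t^2+ν) ^ ((ν-1)/2)) := by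
        apply one_div_le_one_div_of_le (by positivity)
        exact mul_le_mul_of_nonneg_right hle hAe.le
    _ = Real.sqrt (t^2+ν-m) / κ := hfin
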